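/- arXiv:math/0209303 — 2 statements merged into one kernel-verified Lean document; each statement's English description precedes it below -/
import Mathlib

section
/- Let g : ℝ³ → [0,∞) be measurable, let p ∈ (3/2, ∞] and q with 1/p + 1/q = 1. Then ∫_{ℝ³} g(v) dv ≤ C_q · ‖g‖_p^{q/(q+3)} · (∫_{ℝ³} √(1+|v|²) g(v) dv)^{3/(q+3)}, where C_q = (4π/3)^{1/(q+3)} · ((q+3)/3) · (3/q)^{q/(q+3)}, provided both norms on the right are finite. -/
open Real MeasureTheory ENNReal

lemma kin_opt_aux (A K q' : ℝ) (hA : 0 < A) (hK : 0 < K) (hq : 0 < q') :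
    A * ((q' * K / (3 * A)) ^ (q' / (q' + 3))) ^ (3 / q') +
      K / (q' * K / (3 * A)) ^ (q' / (q' + 3)) =
    ((q' + 3) / 3) * (3 / q') ^ (q' / (q' + 3)) * A ^ (q' / (q' + 3)) * K ^ (3 / (q' + 3)) := by
  have hq3 : 0 < q' + 3 := by linarith
  set t : ℝ := q' / (q' + 3) with ht
  set β : ℝ := 3 / (q' + 3) with hβ
  set x : ℝ := q' * K / (3 * A) with hxdef
  have hx0 : 0 < x := by positivity
  have htβ : t + β = 1 := by rw [ht, hβ, ← add_div, div_self hq3.ne']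
  have hxβ : x ^ β = (q' / 3) ^ β * K ^ β * A ^ (-β) := by
    rw [hxdef, show q' * K / (3 * A) = (q' / 3) * K * A⁻¹ by field_simp,
      Real.mul_rpow (by positivity) (by positivity),
      Real.mul_rpow (by positivity) (by positivity),
      ← Real.rpow_neg_one A, ← Real.rpow_mul hA.le, neg_one_mul]
  have hxt : x ^ (-t) = (3 / q') ^ t * K ^ (-t) * A ^ t := by
    have hinv : x⁻¹ = (3 / q') * K⁻¹ * A := by rw [hxdef]; field_simp
    rw [Real.rpow_neg hx0.le, ← Real.inv_rpow hx0.le, hinv,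
      Real.mul_rpow (by positivity) (by positivity),
      Real.mul_rpow (by positivity) (by positivity),
      Real.inv_rpow hK.le, ← Real.rpow_neg hK.le]
  have hpow : ((x ^ t) ^ (3 / q') : ℝ) = x ^ β := by
    rw [← Real.rpow_mul hx0.le]
    congr 1
    rw [ht, hβ]; field_simp
  have hAsplit : A * A ^ (-β) = A ^ t := by
    nth_rewrite 1 [← Real.rpow_one A]
    rw [← Real.rpow_add hA]; congr 1; linarith
  have hKsplit : K * K ^ (-t) = K ^ β := by
    nth_rewrite 1 [← Real.rpow_one K]
    rw [← Real.rpow_add hK]; congr 1; linarith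
  have hqsplit : (q' / 3 : ℝ) ^ β = (3 / q') ^ t * (q' / 3) := by
    have h1 : (q' / 3 : ℝ) ^ β = (q' / 3) ^ (1 : ℝ) * (q' / 3) ^ (-t) := by
      rw [← Real.rpow_add (by positivity)]; congr 1; linarith
    rw [h1, Real.rpow_one, Real.rpow_neg (by positivity), ← Real.inv_rpow (by positivity)]
    rw [show ((q' / 3 : ℝ))⁻¹ = 3 / q' by field_simp]
    ring
  have hL1 : A * (x ^ t) ^ (3 / q') = (3 / q') ^ t * (q' / 3) * A ^ t * K ^ β := by
    rw [hpow, hxβ, hqsplit]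
    have : A * ((3 / q') ^ t * (q' / 3) * K ^ β * A ^ (-β)) =
        (3 / q') ^ t * (q' / 3) * (A * A ^ (-β)) * K ^ β := by ring
    rw [this, hAsplit]
  have hL2 : K / x ^ t = (3 / q') ^ t * A ^ t * K ^ β := by
    rw [div_eq_mul_inv, ← Real.rpow_neg hx0.le, hxt]
    have : K * ((3 / q') ^ t * K ^ (-t) * A ^ t) =
        (3 / q') ^ t * A ^ t * (K * K ^ (-t)) := by ring
    rw [this, hKsplit]
  rw [hL1, hL2]; ring

lemma kin_vol_ball3 (R : ℝ) (hR : 0 ≤ R) :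
    volume (Metric.closedBall (0 : EuclideanSpace ℝ (Fin 3)) R) =
      ENNReal.ofReal (4 * π / 3 * R ^ 3) := by
  have hΓ : Real.Gamma ((Fintype.card (Fin 3) : ℝ) / 2 + 1) = 3 / 4 * Real.sqrt π := by
    rw [show ((Fintype.card (Fin 3) : ℝ)) / 2 = 3 / 2 by simp,
      Real.Gamma_add_one (by norm_num), show (3 : ℝ) / 2 = 1 / 2 + 1 by norm_num,
      Real.Gamma_add_one (by norm_num), Real.Gamma_one_half_eq]
    ring
  rw [EuclideanSpace.volume_closedBall, hΓ]
  have hs : Real.sqrt π ^ Fintype.card (Fin 3) / (3 / 4 * Real.sqrt π) = 4 * π / 3 := by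
    have hπ : (0:ℝ) < Real.sqrt π := Real.sqrt_pos.mpr pi_pos
    have h2 : Real.sqrt π ^ Fintype.card (Fin 3) = π * Real.sqrt π := by
      rw [show Fintype.card (Fin 3) = 3 by simp]
      rw [pow_succ, sq_sqrt pi_pos.le]
    rw [h2]; field_simp
  rw [hs, show Fintype.card (Fin 3) = 3 by simp, ← ENNReal.ofReal_pow hR,
    ← ENNReal.ofReal_mul (by positivity)]
  congr 1; ring

lemma kin_split (g : EuclideanSpace ℝ (Fin 3) → ℝ)
    (hg_meas : Measurable g) (hg_nonneg : ∀ v, 0 ≤ g v)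
    (p q : ℝ≥0∞) (hq0 : q ≠ 0) (hq_top : q ≠ ∞) (hpq' : (1 : ℝ≥0∞) / 1 = 1 / q + 1 / p)
    (hLp : eLpNorm g p volume ≠ ∞)
    (hkin : Integrable (fun v => Real.sqrt (1 + ‖v‖ ^ 2) * g v))
    (hg_int : Integrable g) (R : ℝ) (hR : 0 < R) :
    (∫ v, g v) ≤ (4 * π / 3) ^ (1 / q.toReal) * R ^ (3 / q.toReal) *
        (eLpNorm g p volume).toReal + (∫ v, Real.sqrt (1 + ‖v‖ ^ 2) * g v) / R := by
  have hq'0 : 0 < q.toReal := ENNReal.toReal_pos hq0 hq_top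
  set B := Metric.closedBall (0 : EuclideanSpace ℝ (Fin 3)) R with hBdef
  have hBmeas : MeasurableSet B := measurableSet_closedBall
  have hsplit : (∫ v, g v) = (∫ v in B, g v) + ∫ v in Bᶜ, g v :=
    (integral_add_compl hBmeas hg_int).symm
  -- Hölder on the ball
  have hφmeas : AEStronglyMeasurable (B.indicator fun _ => (1:ℝ)) volume :=
    (measurable_const.indicator hBmeas).aestronglyMeasurable
  have hsmul : (B.indicator fun _ => (1:ℝ)) • g = B.indicator g := by
    funext v; by_cases hv : v ∈ B <;> simp [hv]
  have hholder : eLpNorm (B.indicator g) 1 volume ≤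
      eLpNorm (B.indicator fun _ => (1:ℝ)) q volume * eLpNorm g p volume := by
    rw [← hsmul]
    exact eLpNorm_smul_le_mul_eLpNorm hg_meas.aestronglyMeasurable hφmeas
      (hpqr := ⟨by simpa [one_div] using hpq'.symm⟩)
  have hφnorm : eLpNorm (B.indicator fun _ => (1:ℝ)) q volume =
      (volume B) ^ (1 / q.toReal) := by
    rw [eLpNorm_indicator_const hBmeas hq0 hq_top]; simp
  have hφfin : eLpNorm (B.indicator fun _ => (1:ℝ)) q volume ≠ ∞ := by
    rw [hφnorm, hBdef, kin_vol_ball3 R hR.le]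
    exact (ENNReal.rpow_lt_top_of_nonneg (by positivity) ENNReal.ofReal_ne_top).ne
  have hindnn : ∀ v, 0 ≤ B.indicator g v := fun v =>
    Set.indicator_nonneg (fun x _ => hg_nonneg x) v
  have hball : (∫ v in B, g v) = (eLpNorm (B.indicator g) 1 volume).toReal := by
    rw [← integral_indicator hBmeas, eLpNorm_one_eq_lintegral_enorm,
      ← integral_norm_eq_lintegral_enorm
        (hg_meas.indicator hBmeas).aestronglyMeasurable]
    exact integral_congr_ae (Filter.Eventually.of_forall fun v =>
      (Real.norm_of_nonneg (hindnn v)).symm)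
  have hball2 : (∫ v in B, g v) ≤
      (4 * π / 3) ^ (1 / q.toReal) * R ^ (3 / q.toReal) * (eLpNorm g p volume).toReal := by
    rw [hball]
    have h1 : (eLpNorm (B.indicator g) 1 volume).toReal ≤
        ((eLpNorm (B.indicator fun _ => (1:ℝ)) q volume) * eLpNorm g p volume).toReal :=
      ENNReal.toReal_mono (ENNReal.mul_ne_top hφfin hLp) hholder
    refine h1.trans ?_
    rw [ENNReal.toReal_mul, hφnorm, hBdef, kin_vol_ball3 R hR.le,
      ENNReal.ofReal_rpow_of_pos (by positivity), ENNReal.toReal_ofReal (by positivity)]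
    have h2 : (4 * π / 3 * R ^ 3) ^ (1 / q.toReal) =
        (4 * π / 3) ^ (1 / q.toReal) * R ^ (3 / q.toReal) := by
      rw [Real.mul_rpow (by positivity) (by positivity), ← Real.rpow_natCast R 3,
        ← Real.rpow_mul hR.le]
      rw [show ((3:ℕ):ℝ) * (1/q.toReal) = 3/q.toReal by push_cast; ring]
    rw [h2]
  -- tail bound
  have htail : (∫ v in Bᶜ, g v) ≤ (∫ v, Real.sqrt (1 + ‖v‖ ^ 2) * g v) / R := by
    have hpt : ∀ v ∈ Bᶜ, g v ≤ (1 / R) * (Real.sqrt (1 + ‖v‖ ^ 2) * g v) := by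
      intro v hv
      have hvR : R < ‖v‖ := by
        simpa [hBdef, Metric.mem_closedBall, dist_zero_right] using hv
      have hsq : R ≤ Real.sqrt (1 + ‖v‖ ^ 2) := by
        have h0 : ‖v‖ ≤ Real.sqrt (1 + ‖v‖ ^ 2) := by
          have h0' := Real.sqrt_le_sqrt (show ‖v‖ ^ 2 ≤ 1 + ‖v‖ ^ 2 by linarith)
          rwa [Real.sqrt_sq (norm_nonneg v)] at h0'
        linarith
      have h1 : R * g v ≤ Real.sqrt (1 + ‖v‖ ^ 2) * g v :=
        mul_le_mul_of_nonneg_right hsq (hg_nonneg v)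
      rw [one_div, ← div_eq_inv_mul, le_div_iff₀ hR]
      linarith
    calc (∫ v in Bᶜ, g v) ≤ ∫ v in Bᶜ, (1 / R) * (Real.sqrt (1 + ‖v‖ ^ 2) * g v) := by
          refine setIntegral_mono_on hg_int.integrableOn
            ((hkin.const_mul (1 / R)).integrableOn) hBmeas.compl hpt
      _ = (1 / R) * ∫ v in Bᶜ, Real.sqrt (1 + ‖v‖ ^ 2) * g v := by
          rw [integral_const_mul]
      _ ≤ (1 / R) * ∫ v, Real.sqrt (1 + ‖v‖ ^ 2) * g v := by
          refine mul_le_mul_of_nonneg_left ?_ (by positivity)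
          exact setIntegral_le_integral hkin (Filter.Eventually.of_forall fun v => by
            have := hg_nonneg v; positivity)
      _ = (∫ v, Real.sqrt (1 + ‖v‖ ^ 2) * g v) / R := by rw [one_div, inv_mul_eq_div]
  rw [hsplit]
  exact add_le_add hball2 htail

/-- Kinetic interpolation estimate: for measurable `g ≥ 0` on `ℝ³`, `p ∈ (3/2,∞]`,
`1/p + 1/q = 1`,
`∫ g ≤ C_q ‖g‖_p^{q/(q+3)} (∫ √(1+|v|²) g)^{3/(q+3)}`, with
`C_q = (4π/3)^{1/(q+3)} ((q+3)/3) (3/q)^{q/(q+3)}`. -/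
theorem kinetic_interpolation (g : EuclideanSpace ℝ (Fin 3) → ℝ)
    (hg_meas : Measurable g) (hg_nonneg : ∀ v, 0 ≤ g v)
    (p q : ℝ≥0∞) (hp : (3 / 2 : ℝ≥0∞) < p) (hpq : 1 / p + 1 / q = 1)
    (hLp : eLpNorm g p volume ≠ ∞)
    (hkin : Integrable (fun v => Real.sqrt (1 + ‖v‖ ^ 2) * g v))
    (hg_int : Integrable g) :
    (∫ v, g v) ≤
      ((4 * π / 3) ^ (1 / (q.toReal + 3)) * ((q.toReal + 3) / 3) *
          (3 / q.toReal) ^ (q.toReal / (q.toReal + 3))) *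
        (eLpNorm g p volume).toReal ^ (q.toReal / (q.toReal + 3)) *
        (∫ v, Real.sqrt (1 + ‖v‖ ^ 2) * g v) ^ (3 / (q.toReal + 3)) := by
  have h12 : (1 : ℝ≥0∞) < 3 / 2 := by
    rw [ENNReal.lt_div_iff_mul_lt (by norm_num) (by norm_num)]
    norm_num
  have hp1 : (1 : ℝ≥0∞) < p := lt_trans h12 hp
  have hp0 : p ≠ 0 := (lt_trans zero_lt_one hp1).ne'
  have hq_top : q ≠ ∞ := by
    intro h
    rw [h] at hpq
    simp only [one_div, ENNReal.inv_top, add_zero, ENNReal.inv_eq_one] at hpq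
    rw [hpq] at hp1
    exact lt_irrefl _ hp1
  have hq0 : q ≠ 0 := by
    intro h
    subst h
    simp at hpq
  have hq'0 : 0 < q.toReal := ENNReal.toReal_pos hq0 hq_top
  set q' : ℝ := q.toReal with hq'def
  have hq3 : 0 < q' + 3 := by linarith
  set t : ℝ := q' / (q' + 3) with htdef
  set β : ℝ := 3 / (q' + 3) with hβdef
  have ht0 : 0 < t := by positivity
  have hβ0 : 0 < β := by positivity
  set N : ℝ := (eLpNorm g p volume).toReal with hNdef
  set K : ℝ := ∫ v, Real.sqrt (1 + ‖v‖ ^ 2) * g v with hKdef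
  have hN0 : 0 ≤ N := ENNReal.toReal_nonneg
  have hK0 : 0 ≤ K := integral_nonneg fun v =>
    mul_nonneg (Real.sqrt_nonneg _) (hg_nonneg v)
  have hgK : (∫ v, g v) ≤ K := by
    refine integral_mono hg_int hkin fun v => ?_
    have h1 : (1 : ℝ) ≤ Real.sqrt (1 + ‖v‖ ^ 2) := by
      have h2 := Real.sqrt_le_sqrt (show (1:ℝ) ≤ 1 + ‖v‖ ^ 2 by nlinarith [sq_nonneg ‖v‖])
      rwa [Real.sqrt_one] at h2
    calc g v = 1 * g v := (one_mul _).symm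
      _ ≤ Real.sqrt (1 + ‖v‖ ^ 2) * g v :=
        mul_le_mul_of_nonneg_right h1 (hg_nonneg v)
  -- Edge case K = 0
  rcases eq_or_lt_of_le hK0 with hK | hK
  · rw [← hK, Real.zero_rpow hβ0.ne', mul_zero]
    exact hgK.trans hK.ge
  -- Edge case N = 0
  rcases eq_or_lt_of_le hN0 with hN | hN
  · have hel : eLpNorm g p volume = 0 :=
      ((ENNReal.toReal_eq_zero_iff _).mp hN.symm).resolve_right hLp
    have hg0 : g =ᵐ[volume] 0 :=
      (eLpNorm_eq_zero_iff hg_meas.aestronglyMeasurable hp0).mp hel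
    rw [← hN, Real.zero_rpow ht0.ne', mul_zero, zero_mul]
    have hz : (∫ v, g v) = 0 := by
      rw [integral_congr_ae hg0]; simp
    exact hz.le
  -- Main case
  have hpq' : (1 : ℝ≥0∞) / 1 = 1 / q + 1 / p :=
    (by simp : (1:ℝ≥0∞)/1 = 1).trans (hpq.symm.trans (add_comm _ _))
  set A : ℝ := (4 * π / 3) ^ (1 / q') * N with hAdef
  have hA : 0 < A :=
    mul_pos (Real.rpow_pos_of_pos (by positivity) _) hN
  set R : ℝ := (q' * K / (3 * A)) ^ t with hRdef
  have hR : 0 < R := by positivity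
  have hmain := kin_split g hg_meas hg_nonneg p q hq0 hq_top hpq' hLp hkin hg_int R hR
  have hopt := kin_opt_aux A K q' hA hK hq'0
  calc (∫ v, g v) ≤ (4 * π / 3) ^ (1 / q') * R ^ (3 / q') * N + K / R := hmain
    _ = A * (((q' * K / (3 * A)) ^ t) ^ (3 / q')) + K / (q' * K / (3 * A)) ^ t := by
        rw [hRdef]; ring
    _ = ((q' + 3) / 3) * (3 / q') ^ t * A ^ t * K ^ β := hopt
    _ = ((4 * π / 3) ^ (1 / (q' + 3)) * ((q' + 3) / 3) * (3 / q') ^ t) * N ^ t * K ^ β := by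
        rw [hAdef, Real.mul_rpow (by positivity) hN0, ← Real.rpow_mul (by positivity),
          show (1 / q') * t = 1 / (q' + 3) by rw [htdef]; field_simp]
        ring
end

section
/- Let p ∈ (3/2,∞], 1/p + 1/q = 1, and let f : ℝ³ × ℝ³ → [0,∞) be measurable with finite L¹, L^p, and kinetic norms. Define ρ(x) = ∫ f(x,v) dv and E_K = ∫∫ √(1+|v|²) f(x,v) dx dv. Then ‖ρ‖_{(q+3)/(q+2)} ≤ C_q ‖f‖_p^{q/(q+3)} E_K^{3/(q+3)}, with C_q = (4π/3)^{1/(q+3)} ((q+3)/3) (3/q)^{q/(q+3)}. -/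
open Real MeasureTheory ENNReal

set_option maxHeartbeats 1000000

lemma opt_eq {q a b : ℝ} (hq : 0 < q) (ha : 0 < a) (hb : 0 < b) :
    a * ((q * b / (3 * a)) ^ (q / (q + 3))) ^ (3 / q)
      + b / (q * b / (3 * a)) ^ (q / (q + 3)) =
    ((q + 3) / 3 * (3 / q) ^ (q / (q + 3))) * a ^ (q / (q + 3)) * b ^ (3 / (q + 3)) := by
  have hq3 : 0 < q + 3 := by linarith
  have hc : (0:ℝ) < q * b / (3 * a) := by positivity
  set t := q / (q + 3) with ht
  set s := 3 / (q + 3) with hs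
  have hts : t + s = 1 := by rw [ht, hs]; field_simp
  have ht0 : 0 < t := by positivity
  have hs0 : 0 < s := by positivity
  have h1 : ((q * b / (3 * a)) ^ t) ^ (3 / q) = (q * b / (3 * a)) ^ s := by
    rw [← rpow_mul hc.le]
    congr 1
    rw [ht, hs]
    field_simp
  have hsplit : (q * b / (3 * a)) = (q / 3) * (b / a) := by ring
  have h2 : (q * b / (3 * a)) ^ s = (q / 3) ^ s * (b ^ s / a ^ s) := by
    rw [hsplit, mul_rpow (by positivity) (by positivity), div_rpow hb.le ha.le]
  have h3 : (q * b / (3 * a)) ^ t = (q / 3) ^ t * (b ^ t / a ^ t) := by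
    rw [hsplit, mul_rpow (by positivity) (by positivity), div_rpow hb.le ha.le]
  have has : (0:ℝ) < a ^ s := rpow_pos_of_pos ha s
  have hat : (0:ℝ) < a ^ t := rpow_pos_of_pos ha t
  have hbt : (0:ℝ) < b ^ t := rpow_pos_of_pos hb t
  have hqt : (0:ℝ) < (q / 3) ^ t := rpow_pos_of_pos (by positivity) t
  have hdiv_a : a / a ^ s = a ^ t := by
    rw [show t = 1 - s by linarith, Real.rpow_sub ha, Real.rpow_one]
  have hdiv_b : b / b ^ t = b ^ s := by
    rw [show s = 1 - t by linarith, Real.rpow_sub hb, Real.rpow_one]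
  have h4 : (3 / q) ^ t = ((q / 3) ^ t)⁻¹ := by
    rw [← Real.inv_rpow (by positivity : (0:ℝ) ≤ q/3), inv_div]
  have term1 : a * ((q * b / (3 * a)) ^ t) ^ (3 / q) = (q / 3) ^ s * a ^ t * b ^ s := by
    rw [h1, h2, ← hdiv_a]
    field_simp
  have term2 : b / (q * b / (3 * a)) ^ t = (3 / q) ^ t * a ^ t * b ^ s := by
    rw [h3, h4, ← hdiv_b]
    field_simp
  have h6 : (q/3) ^ t * (q/3) ^ s = q / 3 := by
    rw [← Real.rpow_add (by positivity), hts, Real.rpow_one]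
  have h5 : (q/3) ^ s = (q/3) / ((q/3) ^ t) := by
    rw [eq_div_iff hqt.ne', mul_comm, h6]
  rw [term1, term2, h4, h5]
  field_simp

lemma opt_le {q a b ρ : ℝ} (hq : 0 < q) (ha : 0 ≤ a) (hb : 0 ≤ b) (hρ : 0 ≤ ρ)
    (h : ∀ R : ℝ, 0 < R → ρ ≤ a * R ^ (3 / q) + b / R) :
    ρ ≤ ((q + 3) / 3 * (3 / q) ^ (q / (q + 3))) * a ^ (q / (q + 3)) * b ^ (3 / (q + 3)) := by
  have hq3 : (0:ℝ) < q + 3 := by linarith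
  have ht0 : 0 < q / (q + 3) := by positivity
  have hs0 : 0 < 3 / (q + 3) := by positivity
  rcases eq_or_lt_of_le hb with hb0 | hb0
  · -- b = 0 : show ρ ≤ 0, RHS = 0
    have hρ0 : ρ ≤ 0 := by
      apply _root_.le_of_forall_pos_le_add
      intro ε hε
      rcases eq_or_lt_of_le ha with ha0 | ha0
      · have := h 1 one_pos
        rw [← ha0, ← hb0] at this
        simpa using this.trans (by linarith)
      · have hR : (0:ℝ) < (ε / a) ^ (q / 3) := by positivity
        have h' := h _ hR
        have hpow : ((ε / a) ^ (q / 3)) ^ (3 / q) = ε / a := by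
          rw [← Real.rpow_mul (by positivity)]
          rw [show q / 3 * (3 / q) = 1 by field_simp, Real.rpow_one]
        rw [hpow, ← hb0, zero_div, add_zero, mul_div_cancel₀ _ ha0.ne'] at h'
        linarith
    calc ρ ≤ 0 := hρ0
      _ ≤ _ := by positivity
  rcases eq_or_lt_of_le ha with ha0 | ha0
  · -- a = 0 : RHS = 0 since 0 ^ pos = 0, and ρ ≤ 0
    have hρ0 : ρ ≤ 0 := by
      apply _root_.le_of_forall_pos_le_add
      intro ε hε
      have hR : (0:ℝ) < b / ε := by positivity
      have := h _ hR
      rw [← ha0] at this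
      simp only [zero_mul, zero_add] at this
      have he : b / (b / ε) = ε := by field_simp
      rw [he] at this
      linarith
    have : (0:ℝ) ^ (q / (q + 3)) = 0 := Real.zero_rpow ht0.ne'
    rw [← ha0, this, mul_zero, zero_mul]
    exact hρ0
  · -- main case
    set R := (q * b / (3 * a)) ^ (q / (q + 3)) with hR
    have hRpos : 0 < R := by positivity
    have := h R hRpos
    rwa [hR, opt_eq hq ha0 hb0] at this

lemma lintegral_set_le_Lp {α : Type*} [MeasurableSpace α] (μ : Measure α) {pr qr : ℝ}
    (hpq : pr.HolderConjugate qr) {F : α → ℝ≥0∞} (hF : Measurable F) {s : Set α}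
    (hs : MeasurableSet s) :
    ∫⁻ a in s, F a ∂μ ≤ (∫⁻ a, F a ^ pr ∂μ) ^ (1 / pr) * (μ s) ^ (1 / qr) := by
  have h := ENNReal.lintegral_mul_le_Lp_mul_Lq μ hpq hF.aemeasurable
    (measurable_const.indicator hs).aemeasurable (g := s.indicator fun _ => (1:ℝ≥0∞))
  have h1 : ∫⁻ a, (F * s.indicator fun _ => (1:ℝ≥0∞)) a ∂μ = ∫⁻ a in s, F a ∂μ := by
    rw [← lintegral_indicator hs]
    congr 1
    ext a
    by_cases ha : a ∈ s <;> simp [Set.indicator_apply, ha]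
  have h2 : ∫⁻ a, (s.indicator fun _ => (1:ℝ≥0∞)) a ^ qr ∂μ = μ s := by
    have : ∀ a, (s.indicator fun _ => (1:ℝ≥0∞)) a ^ qr = s.indicator (fun _ => (1:ℝ≥0∞)) a := by
      intro a
      by_cases ha : a ∈ s <;> simp [Set.indicator_apply, ha, ENNReal.zero_rpow_of_pos hpq.symm.pos]
    simp_rw [this]
    rw [lintegral_indicator hs]
    simp
  rwa [h1, h2] at h

lemma vol_ball3 (R : ℝ) (hR : 0 ≤ R) :
    volume (Metric.ball (0 : EuclideanSpace ℝ (Fin 3)) R)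
      = ENNReal.ofReal (4 * π / 3 * R ^ 3) := by
  rw [EuclideanSpace.volume_ball]
  have hcard : (Fintype.card (Fin 3) : ℝ) = 3 := by simp
  have hG : Real.Gamma ((Fintype.card (Fin 3) : ℝ) / 2 + 1) = 3 / 4 * Real.sqrt π := by
    rw [hcard]
    rw [show (3:ℝ)/2 + 1 = (1/2 + 1) + 1 by ring]
    rw [Real.Gamma_add_one (by norm_num), Real.Gamma_add_one (by norm_num),
      Real.Gamma_one_half_eq]
    ring
  have hs : Real.sqrt π ^ Fintype.card (Fin 3) / Real.Gamma ((Fintype.card (Fin 3) : ℝ) / 2 + 1)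
      = 4 * π / 3 := by
    rw [hG]
    have h2 : Real.sqrt π ^ 3 = π * Real.sqrt π := by
      rw [pow_succ, Real.sq_sqrt pi_nonneg]
    have hsp : Real.sqrt π > 0 := Real.sqrt_pos.mpr pi_pos
    rw [hcard] at *
    norm_num [h2]
    field_simp
  rw [hs, ← ENNReal.ofReal_pow hR, ← ENNReal.ofReal_mul (by positivity)]
  congr 1
  simp
  ring

lemma tail_bound {V : Type*} [NormedAddCommGroup V] [MeasurableSpace V] [OpensMeasurableSpace V]
    (μ : Measure V) (F : V → ℝ≥0∞) {R : ℝ} (hR : 0 < R) :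
    ∫⁻ v in (Metric.ball (0:V) R)ᶜ, F v ∂μ ≤
      (∫⁻ v, ENNReal.ofReal (Real.sqrt (1 + ‖v‖ ^ 2)) * F v ∂μ) / ENNReal.ofReal R := by
  rw [ENNReal.le_div_iff_mul_le (Or.inl (by simp [hR])) (Or.inl ofReal_ne_top)]
  have hs : MeasurableSet (Metric.ball (0:V) R)ᶜ := measurableSet_ball.compl
  calc (∫⁻ v in (Metric.ball (0:V) R)ᶜ, F v ∂μ) * ENNReal.ofReal R
      = ∫⁻ v in (Metric.ball (0:V) R)ᶜ, ENNReal.ofReal R * F v ∂μ := by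
        rw [lintegral_const_mul' _ _ ofReal_ne_top, mul_comm]
    _ ≤ ∫⁻ v in (Metric.ball (0:V) R)ᶜ, ENNReal.ofReal (Real.sqrt (1 + ‖v‖ ^ 2)) * F v ∂μ := by
        apply lintegral_mono_ae
        rw [ae_restrict_iff' hs]
        apply ae_of_all
        intro v hv
        apply mul_le_mul_left
        apply ENNReal.ofReal_le_ofReal
        have h1 : R ≤ ‖v‖ := by
          simp only [Set.mem_compl_iff, Metric.mem_ball, dist_zero_right, not_lt] at hv
          exact hv
        have h2 : ‖v‖ ≤ Real.sqrt (1 + ‖v‖ ^ 2) := by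
          rw [show ‖v‖ = Real.sqrt (‖v‖ ^ 2) by rw [Real.sqrt_sq (norm_nonneg v)]]
          apply Real.sqrt_le_sqrt
          nlinarith [Real.sq_sqrt (by positivity : (0:ℝ) ≤ ‖v‖ ^ 2), norm_nonneg v]
        linarith
    _ ≤ ∫⁻ v, ENNReal.ofReal (Real.sqrt (1 + ‖v‖ ^ 2)) * F v ∂μ :=
        setLIntegral_le_lintegral _ _

lemma pointwise_opt {qr : ℝ} (hqr : 0 < qr) {A B ρ : ℝ≥0∞} (hA : A ≠ ∞) (hB : B ≠ ∞)
    (hρB : ρ ≤ B)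
    (h : ∀ R : ℝ, 0 < R →
      ρ ≤ A * ENNReal.ofReal ((4 * π / 3) ^ (1 / qr) * R ^ (3 / qr)) + B / ENNReal.ofReal R) :
    ρ ≤ ENNReal.ofReal ((4 * π / 3) ^ (1 / (qr + 3)) * ((qr + 3) / 3)
          * (3 / qr) ^ (qr / (qr + 3)))
        * A ^ (qr / (qr + 3)) * B ^ (3 / (qr + 3)) := by
  have hρ : ρ ≠ ∞ := ne_top_of_le_ne_top hB hρB
  have hq3 : (0:ℝ) < qr + 3 := by linarith
  have hc4 : (0:ℝ) ≤ (4 * π / 3) ^ (1 / qr) := Real.rpow_nonneg (by positivity) _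
  have key : ρ.toReal ≤ ((qr + 3) / 3 * (3 / qr) ^ (qr / (qr + 3)))
      * (A.toReal * (4 * π / 3) ^ (1 / qr)) ^ (qr / (qr + 3)) * B.toReal ^ (3 / (qr + 3)) := by
    apply opt_le hqr (by positivity) ENNReal.toReal_nonneg ENNReal.toReal_nonneg
    intro R hR
    have hRne : ENNReal.ofReal R ≠ 0 := by simp [hR]
    have hfin : A * ENNReal.ofReal ((4 * π / 3) ^ (1 / qr) * R ^ (3 / qr))
        + B / ENNReal.ofReal R ≠ ∞ := by
      apply ENNReal.add_ne_top.mpr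
      constructor
      · exact ENNReal.mul_ne_top hA ofReal_ne_top
      · exact (ENNReal.div_lt_top hB hRne).ne
    have h' := ENNReal.toReal_mono hfin (h R hR)
    rw [ENNReal.toReal_add (ENNReal.mul_ne_top hA ofReal_ne_top)
        (ENNReal.div_lt_top hB hRne).ne, ENNReal.toReal_mul, ENNReal.toReal_div,
      ENNReal.toReal_ofReal (by positivity), ENNReal.toReal_ofReal hR.le] at h'
    calc ρ.toReal ≤ A.toReal * ((4 * π / 3) ^ (1 / qr) * R ^ (3 / qr))
          + B.toReal / R := h'
      _ = A.toReal * (4 * π / 3) ^ (1 / qr) * R ^ (3 / qr) + B.toReal / R := by ring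
  -- massage constant
  have hmul : (A.toReal * (4 * π / 3) ^ (1 / qr)) ^ (qr / (qr + 3))
      = A.toReal ^ (qr / (qr + 3)) * (4 * π / 3) ^ (1 / (qr + 3)) := by
    rw [Real.mul_rpow ENNReal.toReal_nonneg hc4, ← Real.rpow_mul (by positivity)]
    congr 2
    field_simp
  rw [hmul] at key
  have key2 : ρ.toReal ≤ ((4 * π / 3) ^ (1 / (qr + 3)) * ((qr + 3) / 3)
      * (3 / qr) ^ (qr / (qr + 3))) * A.toReal ^ (qr / (qr + 3))
      * B.toReal ^ (3 / (qr + 3)) := by nlinarith [key]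
  calc ρ = ENNReal.ofReal ρ.toReal := (ENNReal.ofReal_toReal hρ).symm
    _ ≤ ENNReal.ofReal (((4 * π / 3) ^ (1 / (qr + 3)) * ((qr + 3) / 3)
          * (3 / qr) ^ (qr / (qr + 3))) * A.toReal ^ (qr / (qr + 3))
          * B.toReal ^ (3 / (qr + 3))) := ENNReal.ofReal_le_ofReal key2
    _ = ENNReal.ofReal ((4 * π / 3) ^ (1 / (qr + 3)) * ((qr + 3) / 3)
          * (3 / qr) ^ (qr / (qr + 3)))
        * ENNReal.ofReal (A.toReal ^ (qr / (qr + 3)))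
        * ENNReal.ofReal (B.toReal ^ (3 / (qr + 3))) := by
        rw [ENNReal.ofReal_mul (by positivity), ENNReal.ofReal_mul (by positivity)]
    _ = _ := by
        rw [← ENNReal.ofReal_rpow_of_nonneg ENNReal.toReal_nonneg (by positivity),
          ← ENNReal.ofReal_rpow_of_nonneg ENNReal.toReal_nonneg (by positivity),
          ENNReal.ofReal_toReal hA, ENNReal.ofReal_toReal hB]

local notation "V3" => EuclideanSpace ℝ (Fin 3)

/-- For `p ∈ (3/2,∞]`, `1/p + 1/q = 1`, and measurable `f ≥ 0` on `ℝ³ × ℝ³` with finite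
`L¹`, `L^p` and kinetic norms, the spatial density `ρ(x) = ∫ f(x,v) dv` satisfies
`‖ρ‖_{(q+3)/(q+2)} ≤ C_q ‖f‖_p^{q/(q+3)} E_K^{3/(q+3)}` where
`E_K = ∫∫ √(1+|v|²) f` and `C_q = (4π/3)^{1/(q+3)} ((q+3)/3) (3/q)^{q/(q+3)}`. -/
theorem density_Lp_estimate
    (f : EuclideanSpace ℝ (Fin 3) × EuclideanSpace ℝ (Fin 3) → ℝ)
    (hf_meas : Measurable f) (hf_nonneg : ∀ z, 0 ≤ f z)
    (p q : ℝ≥0∞) (hp : (3 / 2 : ℝ≥0∞) < p) (hpq : 1 / p + 1 / q = 1)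
    (hL1 : Integrable f) (hLp : eLpNorm f p volume ≠ ∞)
    (hkin : Integrable (fun z : EuclideanSpace ℝ (Fin 3) × EuclideanSpace ℝ (Fin 3) =>
      Real.sqrt (1 + ‖z.2‖ ^ 2) * f z)) :
    (eLpNorm (fun x : EuclideanSpace ℝ (Fin 3) => ∫ v, f (x, v))
        (ENNReal.ofReal ((q.toReal + 3) / (q.toReal + 2))) volume).toReal ≤
      ((4 * π / 3) ^ (1 / (q.toReal + 3)) * ((q.toReal + 3) / 3) *
          (3 / q.toReal) ^ (q.toReal / (q.toReal + 3))) *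
        (eLpNorm f p volume).toReal ^ (q.toReal / (q.toReal + 3)) *
        (∫ z : EuclideanSpace ℝ (Fin 3) × EuclideanSpace ℝ (Fin 3),
            Real.sqrt (1 + ‖z.2‖ ^ 2) * f z) ^ (3 / (q.toReal + 3)) := by
  -- basic exponent facts
  have h32 : (1 : ℝ≥0∞) < 3 / 2 := by
    rw [ENNReal.lt_div_iff_mul_lt (Or.inl (by norm_num)) (Or.inl (by norm_num))]
    norm_num
  have hp1 : (1 : ℝ≥0∞) < p := lt_trans h32 hp
  have hp0 : p ≠ 0 := (lt_trans (lt_trans zero_lt_one h32) hp).ne'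
  have hq0 : q ≠ 0 := by
    intro h
    rw [h] at hpq
    simp at hpq
  have hqtop : q ≠ ∞ := by
    intro h
    rw [h] at hpq
    simp at hpq
    rw [hpq] at hp1
    exact lt_irrefl _ hp1
  have hq1 : 1 ≤ q := by
    have h1 : 1 / q ≤ 1 / p + 1 / q := le_add_self
    rw [hpq] at h1
    rwa [one_div, ENNReal.inv_le_one] at h1
  set qr := q.toReal with hqr_def
  have hqr1 : 1 ≤ qr := by
    have := ENNReal.toReal_mono hqtop hq1
    simpa using this
  have hqr0 : (0:ℝ) < qr := lt_of_lt_of_le one_pos hqr1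
  have hq2 : (0:ℝ) < qr + 2 := by linarith
  have hq3 : (0:ℝ) < qr + 3 := by linarith
  set r : ℝ := (qr + 3) / (qr + 2) with hr_def
  have hr0 : (0:ℝ) < r := by positivity
  set t : ℝ := qr / (qr + 3) with ht_def
  set s : ℝ := 3 / (qr + 3) with hs_def
  have ht0 : (0:ℝ) < t := by positivity
  have hs0 : (0:ℝ) < s := by positivity
  set K : ℝ := (4 * π / 3) ^ (1 / (qr + 3)) * ((qr + 3) / 3) * (3 / qr) ^ t with hK_def
  have hK0 : (0:ℝ) ≤ K := by positivity
  set N : ℝ≥0∞ := eLpNorm f p volume with hN_def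
  set EK : ℝ := ∫ z : V3 × V3, Real.sqrt (1 + ‖z.2‖ ^ 2) * f z with hEK_def
  have hEK0 : (0:ℝ) ≤ EK :=
    integral_nonneg fun z => mul_nonneg (Real.sqrt_nonneg _) (hf_nonneg z)
  -- ENNReal versions of the data
  set F : V3 × V3 → ℝ≥0∞ := fun z => ENNReal.ofReal (f z) with hF_def
  have hF : Measurable F := ENNReal.measurable_ofReal.comp hf_meas
  set W : V3 → ℝ≥0∞ := fun v => ENNReal.ofReal (Real.sqrt (1 + ‖v‖ ^ 2)) with hW_def
  have hWmeas : Measurable W := by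
    apply ENNReal.measurable_ofReal.comp
    exact (continuous_const.add ((continuous_norm).pow 2)).sqrt.measurable
  have hW1 : ∀ v : V3, 1 ≤ W v := by
    intro v
    rw [hW_def]
    simp only []
    rw [show (1:ℝ≥0∞) = ENNReal.ofReal 1 by simp]
    apply ENNReal.ofReal_le_ofReal
    nlinarith [Real.sq_sqrt (show (0:ℝ) ≤ 1 + ‖v‖ ^ 2 by positivity),
      Real.sqrt_nonneg (1 + ‖v‖ ^ 2), sq_nonneg ‖v‖]
  set B : V3 → ℝ≥0∞ := fun x => ∫⁻ v, W v * F (x, v) with hB_def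
  have hBmeas : Measurable B :=
    Measurable.lintegral_prod_right' (f := fun z : V3 × V3 => W z.2 * F z)
      ((hWmeas.comp measurable_snd).mul hF)
  set ρe : V3 → ℝ≥0∞ := fun x => ∫⁻ v, F (x, v) with hρe_def
  have hBint : ∫⁻ x, B x = ENNReal.ofReal EK := by
    have h1 : ∫⁻ x, B x = ∫⁻ z : V3 × V3, W z.2 * F z := by
      rw [Measure.volume_eq_prod, lintegral_prod]
      exact ((hWmeas.comp measurable_snd).mul hF).aemeasurable
    have h2 : ∀ z : V3 × V3, W z.2 * F z = ENNReal.ofReal (Real.sqrt (1 + ‖z.2‖ ^ 2) * f z) :=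
      fun z => (ENNReal.ofReal_mul (Real.sqrt_nonneg _)).symm
    rw [h1]
    simp_rw [h2]
    rw [← ofReal_integral_eq_lintegral_ofReal hkin
      (ae_of_all _ fun z => mul_nonneg (Real.sqrt_nonneg _) (hf_nonneg z))]
  have hBfin : ∀ᵐ x : V3, B x < ∞ := by
    apply ae_lt_top hBmeas
    rw [hBint]
    exact ofReal_ne_top
  have hρeB : ∀ x : V3, ρe x ≤ B x := by
    intro x
    apply lintegral_mono
    intro v
    calc F (x, v) = 1 * F (x, v) := (one_mul _).symm
      _ ≤ W v * F (x, v) := mul_le_mul_left (hW1 v) _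
  -- the two branches
  obtain ⟨A, hAfin, hAball, hAholder⟩ :
      ∃ A : V3 → ℝ≥0∞, (∀ᵐ x : V3, A x < ∞) ∧
        (∀ᵐ x : V3, ∀ R : ℝ, 0 < R →
          ∫⁻ v in Metric.ball (0:V3) R, F (x, v) ≤
            A x * (volume (Metric.ball (0:V3) R)) ^ (1 / qr)) ∧
        (∫⁻ x, A x ^ (qr / (qr + 2)) * B x ^ (3 / (qr + 2)) ≤
          N ^ (qr / (qr + 2)) * (∫⁻ x, B x) ^ (3 / (qr + 2))) := by
    rcases eq_or_ne p ∞ with hptop | hptop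
    · -- p = ∞, q = 1
      have hq_eq : q = 1 := by
        rw [hptop] at hpq
        simp at hpq
        exact hpq
      have hqr_eq : qr = 1 := by rw [hqr_def, hq_eq]; simp
      have hNtop : N = eLpNormEssSup f volume := by rw [hN_def, hptop, eLpNorm_exponent_top]
      refine ⟨fun _ => N, ae_of_all _ fun _ => hLp.lt_top, ?_, ?_⟩
      · have hae : ∀ᵐ z : V3 × V3, F z ≤ N := by
          filter_upwards [ae_le_eLpNormEssSup (f := f) (μ := volume)] with z hz
          rw [hNtop, hF_def]
          simp only []
          rw [← Real.enorm_eq_ofReal (hf_nonneg z)]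
          exact_mod_cast hz
        rw [Measure.volume_eq_prod] at hae
        have hxv := Measure.ae_ae_of_ae_prod hae
        filter_upwards [hxv] with x hx
        intro R hR
        calc ∫⁻ v in Metric.ball (0:V3) R, F (x, v)
            ≤ ∫⁻ _ in Metric.ball (0:V3) R, N := lintegral_mono_ae (ae_restrict_of_ae hx)
          _ = N * volume (Metric.ball (0:V3) R) := setLIntegral_const _ _
          _ = N * volume (Metric.ball (0:V3) R) ^ (1 / qr) := by
              rw [hqr_eq]
              norm_num
      · rw [hqr_eq]
        simp only [show (3:ℝ) / (1 + 2) = 1 by norm_num, ENNReal.rpow_one]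
        rw [lintegral_const_mul' _ _ (rpow_ne_top_of_nonneg (by norm_num) hLp)]
    · -- p finite
      have hpr1 : 1 < p.toReal := by
        have := (ENNReal.toReal_lt_toReal one_ne_top hptop).mpr hp1
        simpa using this
      set pr := p.toReal with hpr_def
      have hpr0 : (0:ℝ) < pr := lt_trans one_pos hpr1
      have hpr_ne : pr ≠ 0 := hpr0.ne'
      have hconj : pr.HolderConjugate qr := by
        rw [Real.holderConjugate_iff]
        constructor
        · exact hpr1
        · have h1 : (1/p).toReal + (1/q).toReal = 1 := by
            rw [← ENNReal.toReal_add (by simp [hp0]) (by simp [hq0]), hpq]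
            simp
          simpa [one_div, ENNReal.toReal_inv] using h1
      have hqr_gt1 : 1 < qr := hconj.symm.lt
      have hpq_rel : pr + qr = pr * qr := by
        have h := hconj.inv_add_inv_eq_one
        field_simp at h
        linarith
      set G : V3 → ℝ≥0∞ := fun x => ∫⁻ v, F (x, v) ^ pr with hG_def
      have hGmeas : Measurable G :=
        Measurable.lintegral_prod_right' (f := fun z : V3 × V3 => F z ^ pr) (hF.pow_const pr)
      have hGint : ∫⁻ x, G x = N ^ pr := by
        have h1 : ∫⁻ x, G x = ∫⁻ z : V3 × V3, F z ^ pr := by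
          rw [Measure.volume_eq_prod, lintegral_prod]
          exact (hF.pow_const pr).aemeasurable
        rw [h1, hN_def, eLpNorm_eq_lintegral_rpow_enorm_toReal hp0 hptop, ← ENNReal.rpow_mul,
          one_div, inv_mul_cancel₀ hpr_ne, ENNReal.rpow_one]
        apply lintegral_congr
        intro z
        rw [hF_def]
        simp only []
        rw [Real.enorm_eq_ofReal (hf_nonneg z)]
      have hGfin : ∀ᵐ x : V3, G x < ∞ :=
        ae_lt_top hGmeas (by rw [hGint]; exact rpow_ne_top_of_nonneg hpr0.le hLp)
      refine ⟨fun x => G x ^ (1/pr), ?_, ?_, ?_⟩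
      · filter_upwards [hGfin] with x hx
        exact ENNReal.rpow_lt_top_of_nonneg (by positivity) hx.ne
      · apply ae_of_all
        intro x R hR
        exact lintegral_set_le_Lp volume hconj (hF.comp measurable_prodMk_left)
          measurableSet_ball
      · -- Hölder in x with exponents u, u'
        set u : ℝ := pr * (qr + 2) / qr with hu_def
        set u' : ℝ := (qr + 2) / 3 with hu'_def
        have hu_pos : 0 < u := by rw [hu_def]; positivity
        have hu : u.HolderConjugate u' := by
          rw [Real.holderConjugate_iff]
          constructor
          · rw [hu_def, lt_div_iff₀ hqr0]
            nlinarith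
          · rw [hu_def, hu'_def]
            field_simp
            ring_nf
            nlinarith [hpq_rel]
        have happ := ENNReal.lintegral_mul_le_Lp_mul_Lq volume hu
          (((hGmeas.pow_const (1/pr)).pow_const (qr/(qr+2))).aemeasurable)
          ((hBmeas.pow_const (3/(qr+2))).aemeasurable)
        simp only [Pi.mul_apply] at happ
        have hexp1 : ∀ x : V3, ((G x ^ (1/pr)) ^ (qr/(qr+2))) ^ u = G x := by
          intro x
          rw [← ENNReal.rpow_mul, ← ENNReal.rpow_mul,
            show 1/pr * (qr/(qr+2) * u) = 1 by rw [hu_def]; field_simp,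
            ENNReal.rpow_one]
        have hexp2 : ∀ x : V3, (B x ^ ((3:ℝ)/(qr+2))) ^ u' = B x := by
          intro x
          rw [← ENNReal.rpow_mul,
            show (3:ℝ)/(qr+2) * u' = 1 by rw [hu'_def]; field_simp,
            ENNReal.rpow_one]
        simp_rw [hexp1, hexp2] at happ
        calc ∫⁻ x, (G x ^ (1/pr)) ^ (qr/(qr+2)) * B x ^ ((3:ℝ)/(qr+2)) ∂volume
            ≤ (∫⁻ x, G x) ^ (1/u) * (∫⁻ x, B x) ^ (1/u') := happ
          _ = N ^ (qr/(qr+2)) * (∫⁻ x, B x) ^ ((3:ℝ)/(qr+2)) := by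
              rw [hGint, ← ENNReal.rpow_mul,
                show pr * (1/u) = qr/(qr+2) by rw [hu_def]; field_simp,
                show (1:ℝ)/u' = 3/(qr+2) by rw [hu'_def]; rw [one_div_div]]
  -- pointwise estimate
  have hpoint : ∀ᵐ x : V3, ρe x ≤ ENNReal.ofReal K * A x ^ t * B x ^ s := by
    filter_upwards [hAfin, hBfin, hAball] with x hAx hBx hballx
    apply pointwise_opt hqr0 hAx.ne hBx.ne (hρeB x)
    intro R hR
    have hsplit : ρe x = (∫⁻ v in Metric.ball (0:V3) R, F (x, v))
        + ∫⁻ v in (Metric.ball (0:V3) R)ᶜ, F (x, v) :=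
      (lintegral_add_compl _ measurableSet_ball).symm
    rw [hsplit]
    apply add_le_add
    · have h1 := hballx R hR
      have h2 : (volume (Metric.ball (0:V3) R)) ^ (1 / qr)
          = ENNReal.ofReal ((4 * π / 3) ^ (1 / qr) * R ^ (3 / qr)) := by
        have hre : (4 * π / 3 * R ^ 3) ^ (1 / qr) = (4 * π / 3) ^ (1 / qr) * R ^ (3 / qr) := by
          rw [Real.mul_rpow (by positivity) (by positivity), ← Real.rpow_natCast R 3,
            ← Real.rpow_mul hR.le]
          congr 1
          push_cast
          ring
        rw [vol_ball3 R hR.le, ENNReal.ofReal_rpow_of_pos (by positivity), hre]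
      rwa [h2] at h1
    · exact tail_bound volume (fun v => F (x, v)) hR
  -- main integral estimate
  have hconst_ne : (ENNReal.ofReal K) ^ r ≠ ∞ := rpow_ne_top_of_nonneg hr0.le ofReal_ne_top
  have hmain : ∫⁻ x, ρe x ^ r ≤
      (ENNReal.ofReal K) ^ r * (N ^ (qr / (qr + 2)) * (ENNReal.ofReal EK) ^ (3 / (qr + 2))) := by
    calc ∫⁻ x, ρe x ^ r ≤ ∫⁻ x, (ENNReal.ofReal K * A x ^ t * B x ^ s) ^ r :=
          lintegral_mono_ae (hpoint.mono fun x hx => ENNReal.rpow_le_rpow hx hr0.le)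
      _ = ∫⁻ x, (ENNReal.ofReal K) ^ r * (A x ^ (qr / (qr + 2)) * B x ^ (3 / (qr + 2))) := by
          apply lintegral_congr
          intro x
          rw [ENNReal.mul_rpow_of_nonneg _ _ hr0.le, ENNReal.mul_rpow_of_nonneg _ _ hr0.le,
            ← ENNReal.rpow_mul, ← ENNReal.rpow_mul]
          rw [show t * r = qr / (qr + 2) by rw [ht_def, hr_def]; field_simp,
            show s * r = 3 / (qr + 2) by rw [hs_def, hr_def]; field_simp]
          ring
      _ = (ENNReal.ofReal K) ^ r * ∫⁻ x, A x ^ (qr / (qr + 2)) * B x ^ (3 / (qr + 2)) :=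
          lintegral_const_mul' _ _ hconst_ne
      _ ≤ (ENNReal.ofReal K) ^ r * (N ^ (qr / (qr + 2)) * (∫⁻ x, B x) ^ (3 / (qr + 2))) :=
          mul_le_mul_right hAholder _
      _ = _ := by rw [hBint]
  -- identify the LHS
  have hslice : ∀ᵐ x : V3, Integrable (fun v => f (x, v)) := by
    have h := hL1
    rw [Measure.volume_eq_prod] at h
    exact h.prod_right_ae
  have hLHS : eLpNorm (fun x : V3 => ∫ v, f (x, v)) (ENNReal.ofReal r) volume
      = (∫⁻ x, ρe x ^ r) ^ (1 / r) := by
    rw [eLpNorm_eq_lintegral_rpow_enorm_toReal (by simp [hr0]) ofReal_ne_top,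
      ENNReal.toReal_ofReal hr0.le]
    congr 1
    apply lintegral_congr_ae
    filter_upwards [hslice] with x hx
    congr 1
    rw [Real.enorm_eq_ofReal (integral_nonneg fun v => hf_nonneg _),
      ofReal_integral_eq_lintegral_ofReal hx (ae_of_all _ fun v => hf_nonneg _)]
  have hfinal : eLpNorm (fun x : V3 => ∫ v, f (x, v)) (ENNReal.ofReal r) volume ≤
      ENNReal.ofReal K * N ^ t * (ENNReal.ofReal EK) ^ s := by
    rw [hLHS]
    calc (∫⁻ x, ρe x ^ r) ^ (1 / r)
        ≤ ((ENNReal.ofReal K) ^ r *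
            (N ^ (qr / (qr + 2)) * (ENNReal.ofReal EK) ^ (3 / (qr + 2)))) ^ (1 / r) :=
          ENNReal.rpow_le_rpow hmain (by positivity)
      _ = ENNReal.ofReal K * N ^ t * (ENNReal.ofReal EK) ^ s := by
          rw [ENNReal.mul_rpow_of_nonneg _ _ (by positivity),
            ENNReal.mul_rpow_of_nonneg _ _ (by positivity),
            ← ENNReal.rpow_mul, ← ENNReal.rpow_mul, ← ENNReal.rpow_mul]
          rw [show r * (1 / r) = 1 by field_simp, ENNReal.rpow_one,
            show qr / (qr + 2) * (1 / r) = t by rw [ht_def, hr_def]; field_simp,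
            show 3 / (qr + 2) * (1 / r) = s by rw [hs_def, hr_def]; field_simp]
          ring
  -- pass to real numbers
  have hRHS_ne : ENNReal.ofReal K * N ^ t * (ENNReal.ofReal EK) ^ s ≠ ∞ :=
    ENNReal.mul_ne_top (ENNReal.mul_ne_top ofReal_ne_top (rpow_ne_top_of_nonneg ht0.le hLp))
      (rpow_ne_top_of_nonneg hs0.le ofReal_ne_top)
  have := ENNReal.toReal_mono hRHS_ne hfinal
  rw [ENNReal.toReal_mul, ENNReal.toReal_mul, ENNReal.toReal_ofReal hK0,
    ← ENNReal.toReal_rpow, ← ENNReal.toReal_rpow, ENNReal.toReal_ofReal hEK0] at this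
  exact this
end
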